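/- The identity of formal power series: ∑_{n≥1} n q^n / (q;q)_n = (1/(q;q)_∞) ∑_{n≥1} q^n/(1-q^n). -/

import Mathlib

open Finset Filter Topology

namespace Stmt9

noncomputable def P (q : ℂ) (n : ℕ) : ℂ := ∏ j ∈ Finset.range n, (1 - q ^ (j + 1))

variable {q : ℂ}

lemma hpow (hq : ‖q‖ < 1) (j : ℕ) : ‖q ^ (j+1)‖ ≤ ‖q‖ := by
  rw [norm_pow]
  exact pow_le_of_le_one (norm_nonneg q) hq.le j.succ_ne_zero

lemma hfac (hq : ‖q‖ < 1) (j : ℕ) : 1 - q ^ (j+1) ≠ 0 := by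
  intro h
  have h2 : q ^ (j+1) = 1 := by linear_combination -h
  have := hpow hq j
  rw [h2, norm_one] at this
  linarith

lemma hPne (hq : ‖q‖ < 1) (n : ℕ) : P q n ≠ 0 :=
  Finset.prod_ne_zero_iff.mpr fun j _ => hfac hq j

/-- lower bound on each real factor -/
lemma factor_lb (hq : ‖q‖ < 1) (j : ℕ) :
    Real.exp (-(‖q‖^(j+1) / (1 - ‖q‖))) ≤ 1 - ‖q‖^(j+1) := by
  set r := ‖q‖ with hr
  have h0 : 0 ≤ r := norm_nonneg q
  set b := r^(j+1) with hb
  have hrj : b ≤ r := by simpa [hb, norm_pow] using hpow hq j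
  have hb0 : 0 ≤ b := pow_nonneg h0 _
  set t := b / (1-r) with htd
  have ht : 0 ≤ t := div_nonneg hb0 (by linarith)
  have key : 1 ≤ (1-b)*(1+t) := by
    have h2 : b ≤ t*(1-b) := by
      have : b * (1-r) / (1-r) ≤ b * (1-b) / (1-r) := by
        gcongr
      calc b = b*(1-r)/(1-r) := by rw [mul_div_assoc, div_self (by linarith : (1:ℝ)-r ≠ 0), mul_one]
        _ ≤ b*(1-b)/(1-r) := this
        _ = t*(1-b) := by rw [htd]; ring
    nlinarith
  have h4 : Real.exp (-t) ≤ (1+t)⁻¹ := by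
    rw [Real.exp_neg]
    exact inv_anti₀ (by linarith) (by linarith [Real.add_one_le_exp t])
  have h5 : (1+t)⁻¹ ≤ 1-b := by
    rw [inv_le_iff_one_le_mul₀ (by linarith)]
    nlinarith
  linarith

end Stmt9
namespace Stmt9
open Finset Filter Topology
variable {q : ℂ}

noncomputable def c (q : ℂ) : ℝ := Real.exp (-(‖q‖ / ((1 - ‖q‖) * (1 - ‖q‖))))

lemma c_pos (q : ℂ) : 0 < c q := Real.exp_pos _

lemma sum_pow_le (hq : ‖q‖ < 1) (n : ℕ) : ∑ j ∈ range n, ‖q‖ ^ (j+1) ≤ ‖q‖ / (1 - ‖q‖) := by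
  have h0 : (0:ℝ) ≤ ‖q‖ := norm_nonneg q
  have hs : Summable (fun j : ℕ => ‖q‖ ^ j) := summable_geometric_of_lt_one h0 hq
  calc ∑ j ∈ range n, ‖q‖ ^ (j+1) = ‖q‖ * ∑ j ∈ range n, ‖q‖ ^ j := by
        rw [Finset.mul_sum]; exact Finset.sum_congr rfl fun j _ => by ring
    _ ≤ ‖q‖ * (1 - ‖q‖)⁻¹ := by
        apply mul_le_mul_of_nonneg_left _ h0
        calc ∑ j ∈ range n, ‖q‖ ^ j ≤ ∑' j : ℕ, ‖q‖ ^ j :=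
              Summable.sum_le_tsum _ (fun i _ => pow_nonneg h0 i) hs
          _ = (1 - ‖q‖)⁻¹ := tsum_geometric_of_lt_one h0 hq
    _ = ‖q‖ / (1 - ‖q‖) := by rw [div_eq_mul_inv]

lemma norm_P_ge (hq : ‖q‖ < 1) (n : ℕ) : c q ≤ ‖P q n‖ := by
  have h0 : (0:ℝ) ≤ ‖q‖ := norm_nonneg q
  have h1 : ‖P q n‖ = ∏ j ∈ range n, ‖1 - q ^ (j+1)‖ := by
    rw [P, norm_prod]
  have h2 : ∏ j ∈ range n, (1 - ‖q‖ ^ (j+1)) ≤ ∏ j ∈ range n, ‖1 - q ^ (j+1)‖ := by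
    apply Finset.prod_le_prod
    · intro j _
      have := hpow hq j
      rw [norm_pow] at this
      linarith
    · intro j _
      calc 1 - ‖q‖ ^ (j+1) = ‖(1:ℂ)‖ - ‖q ^ (j+1)‖ := by rw [norm_one, norm_pow]
        _ ≤ ‖1 - q ^ (j+1)‖ := norm_sub_norm_le _ _
  have h3 : Real.exp (-(∑ j ∈ range n, ‖q‖ ^ (j+1)) / (1 - ‖q‖)) ≤
      ∏ j ∈ range n, (1 - ‖q‖ ^ (j+1)) := by
    have : Real.exp (-(∑ j ∈ range n, ‖q‖ ^ (j+1)) / (1 - ‖q‖)) =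
        ∏ j ∈ range n, Real.exp (-(‖q‖ ^ (j+1) / (1 - ‖q‖))) := by
      rw [← Real.exp_sum]
      congr 1
      simp [neg_div, Finset.sum_div]
    rw [this]
    exact Finset.prod_le_prod (fun j _ => (Real.exp_pos _).le) (fun j _ => factor_lb hq j)
  have h4 : c q ≤ Real.exp (-(∑ j ∈ range n, ‖q‖ ^ (j+1)) / (1 - ‖q‖)) := by
    rw [c]
    apply Real.exp_le_exp.2
    rw [neg_div, neg_le_neg_iff]
    have h1r : (0:ℝ) < 1 - ‖q‖ := by linarith
    rw [div_le_div_iff₀ h1r (by positivity)]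
    have := sum_pow_le hq n
    have h5 := (le_div_iff₀ h1r).1 this
    nlinarith
  linarith [h1 ▸ h2, h3, h4]

end Stmt9
namespace Stmt9
open Finset Filter Topology
variable {q : ℂ}

lemma norm_div_P_le (hq : ‖q‖ < 1) (f : ℕ → ℂ) (n : ℕ) :
    ‖f n / P q n‖ ≤ (c q)⁻¹ * ‖f n‖ := by
  rw [norm_div, div_eq_mul_inv, mul_comm]
  apply mul_le_mul_of_nonneg_right _ (norm_nonneg _)
  exact inv_anti₀ (c_pos q) (norm_P_ge hq n)

lemma summable_div_P (hq : ‖q‖ < 1) {f : ℕ → ℂ} {g : ℕ → ℝ} (hg : Summable g)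
    (hb : ∀ n, ‖f n‖ ≤ g n) : Summable fun n => f n / P q n := by
  apply Summable.of_norm_bounded (g := fun n => (c q)⁻¹ * g n) (hg.mul_left _)
  intro n
  exact (norm_div_P_le hq f n).trans (by
    have := hb n
    have hc := (c_pos q)
    apply mul_le_mul_of_nonneg_left this (by positivity))

lemma norm_tsum_div_P_le (hq : ‖q‖ < 1) {f : ℕ → ℂ} {g : ℕ → ℝ} (hg : Summable g)
    (hb : ∀ n, ‖f n‖ ≤ g n) : ‖∑' n, f n / P q n‖ ≤ (c q)⁻¹ * ∑' n, g n := by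
  have hs : HasSum (fun n => (c q)⁻¹ * g n) ((c q)⁻¹ * ∑' n, g n) := hg.hasSum.mul_left _
  apply tsum_of_norm_bounded hs
  intro n
  exact (norm_div_P_le hq f n).trans (mul_le_mul_of_nonneg_left (hb n)
    (inv_nonneg.2 (c_pos q).le))

/-- geometric-type bounds -/
lemma pow_mul_le (hq : ‖q‖ < 1) {k : ℕ} (hk : 1 ≤ k) (n : ℕ) : ‖q ^ (k*n)‖ ≤ ‖q‖ ^ n := by
  rw [norm_pow]
  exact pow_le_pow_of_le_one (norm_nonneg q) hq.le (Nat.le_mul_of_pos_left n hk)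

noncomputable def Ee (q : ℂ) (k : ℕ) : ℂ := ∑' n : ℕ, q ^ (k*n) / P q n
noncomputable def Gg (q : ℂ) (k : ℕ) : ℂ := ∑' n : ℕ, (n : ℂ) * q ^ (k*n) / P q n

lemma summable_E (hq : ‖q‖ < 1) {k : ℕ} (hk : 1 ≤ k) :
    Summable fun n => q ^ (k*n) / P q n :=
  summable_div_P hq (summable_geometric_of_lt_one (norm_nonneg q) hq)
    (pow_mul_le hq hk)

lemma summable_G (hq : ‖q‖ < 1) {k : ℕ} (hk : 1 ≤ k) :
    Summable fun n : ℕ => (n : ℂ) * q ^ (k*n) / P q n := by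
  apply summable_div_P hq (f := fun n => (n:ℂ) * q ^ (k*n)) (g := fun n => (n:ℝ) * ‖q‖ ^ n)
  · simpa using summable_pow_mul_geometric_of_norm_lt_one 1 (by rw [Real.norm_of_nonneg (norm_nonneg _)]; exact hq)
  · intro n
    rw [norm_mul, Complex.norm_natCast]
    exact mul_le_mul_of_nonneg_left (pow_mul_le hq hk n) (Nat.cast_nonneg n)

end Stmt9
namespace Stmt9
open Finset Filter Topology
variable {q : ℂ}

lemma P_succ (n : ℕ) : P q (n+1) = P q n * (1 - q^(n+1)) := Finset.prod_range_succ _ _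

lemma shift (hq : ‖q‖ < 1) (f : ℕ → ℂ)
    (hs : Summable fun n : ℕ => f n * (1 - q^n) / P q n) :
    ∑' n : ℕ, f n * (1 - q^n) / P q n = ∑' n : ℕ, f (n+1) / P q n := by
  rw [Summable.tsum_eq_zero_add hs]
  have h0 : f 0 * (1 - q^0) / P q 0 = 0 := by simp [P]
  rw [h0, zero_add]
  congr 1
  funext n
  rw [P_succ, mul_div_mul_right _ _ (hfac hq n)]

lemma FE_E (hq : ‖q‖ < 1) {k : ℕ} (hk : 1 ≤ k) :
    Ee q k - Ee q (k+1) = q^k * Ee q k := by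
  have hsub : Summable fun n : ℕ => (q^(k*n) * (1 - q^n)) / P q n := by
    apply summable_div_P hq (g := fun n => ‖q‖^n * 2)
      ((summable_geometric_of_lt_one (norm_nonneg q) hq).mul_right 2)
    intro n
    rw [norm_mul]
    apply mul_le_mul (pow_mul_le hq hk n) _ (norm_nonneg _) (pow_nonneg (norm_nonneg q) n)
    calc ‖1 - q^n‖ ≤ ‖(1:ℂ)‖ + ‖q^n‖ := norm_sub_le _ _
      _ ≤ 1 + 1 := by
          rw [norm_one, norm_pow]
          have := pow_le_one₀ (norm_nonneg q) hq.le (n := n)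
          linarith
      _ = 2 := by norm_num
  have h1 : Ee q k - Ee q (k+1) = ∑' n : ℕ, (q^(k*n) * (1 - q^n)) / P q n := by
    rw [Ee, Ee, ← Summable.tsum_sub (summable_E hq hk) (summable_E hq (Nat.le_add_left 1 k))]
    congr 1
    funext n
    rw [div_sub_div_same]
    congr 1
    rw [add_mul, one_mul, pow_add]
    ring
  rw [h1, shift hq _ hsub, Ee, ← tsum_mul_left]
  congr 1
  funext n
  rw [← mul_div_assoc]
  congr 1
  rw [Nat.mul_succ, pow_add, mul_comm]

end Stmt9
namespace Stmt9
open Finset Filter Topology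
variable {q : ℂ}

lemma norm_one_sub_pow_le (hq : ‖q‖ < 1) (n : ℕ) : ‖1 - q^n‖ ≤ 2 := by
  calc ‖1 - q^n‖ ≤ ‖(1:ℂ)‖ + ‖q^n‖ := norm_sub_le _ _
    _ ≤ 1 + 1 := by
        rw [norm_one, norm_pow]
        have := pow_le_one₀ (norm_nonneg q) hq.le (n := n)
        linarith
    _ = 2 := by norm_num

lemma FE_G (hq : ‖q‖ < 1) {k : ℕ} (hk : 1 ≤ k) :
    Gg q k - Gg q (k+1) = q^k * (Gg q k + Ee q k) := by
  have hgs : Summable (fun n : ℕ => ((n:ℝ) * ‖q‖^n) * 2) := by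
    apply Summable.mul_right
    simpa using summable_pow_mul_geometric_of_norm_lt_one 1
      (by rw [Real.norm_of_nonneg (norm_nonneg _)]; exact hq)
  have hsub : Summable fun n : ℕ => ((n:ℂ) * q^(k*n) * (1 - q^n)) / P q n := by
    apply summable_div_P hq (g := fun n => ((n:ℝ) * ‖q‖^n) * 2) hgs
    intro n
    rw [norm_mul, norm_mul, Complex.norm_natCast]
    apply mul_le_mul _ (norm_one_sub_pow_le hq n) (norm_nonneg _) (by positivity)
    exact mul_le_mul_of_nonneg_left (pow_mul_le hq hk n) (Nat.cast_nonneg n)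
  have h1 : Gg q k - Gg q (k+1) = ∑' n : ℕ, ((n:ℂ) * q^(k*n) * (1 - q^n)) / P q n := by
    rw [Gg, Gg, ← Summable.tsum_sub (summable_G hq hk) (summable_G hq (Nat.le_add_left 1 k))]
    congr 1
    funext n
    rw [div_sub_div_same]
    congr 1
    rw [add_mul, one_mul, pow_add]
    ring
  rw [h1, shift hq _ hsub]
  have h2 : ∀ n : ℕ, ((n:ℂ)+1) * q^(k*(n+1)) / P q n
      = q^k * ((n:ℂ) * q^(k*n) / P q n) + q^k * (q^(k*n) / P q n) := by
    intro n
    rw [Nat.mul_succ, pow_add]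
    field_simp
  calc ∑' n : ℕ, ((n+1 : ℕ) : ℂ) * q^(k*(n+1)) / P q n
      = ∑' n : ℕ, (q^k * ((n:ℂ) * q^(k*n) / P q n) + q^k * (q^(k*n) / P q n)) := by
        congr 1
        funext n
        push_cast
        exact h2 n
    _ = q^k * Gg q k + q^k * Ee q k := by
        rw [Summable.tsum_add (((summable_G hq hk).mul_left _)) ((summable_E hq hk).mul_left _),
          tsum_mul_left, tsum_mul_left, Gg, Ee]
    _ = q^k * (Gg q k + Ee q k) := by ring

end Stmt9
namespace Stmt9
open Finset Filter Topology
variable {q : ℂ}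

lemma E_closed (hq : ‖q‖ < 1) (k : ℕ) : Ee q (k+1) = Ee q 1 * P q k := by
  induction k with
  | zero => simp [P]
  | succ k ih =>
    have h := FE_E hq (k := k+1) (Nat.le_add_left 1 k)
    have : Ee q (k+2) = Ee q (k+1) * (1 - q^(k+1)) := by linear_combination -h
    rw [this, ih, P_succ]
    ring

lemma E_tendsto_one (hq : ‖q‖ < 1) : Tendsto (fun K => Ee q K) atTop (𝓝 1) := by
  set r := ‖q‖ with hr
  have h0 : (0:ℝ) ≤ r := norm_nonneg q
  rw [← tendsto_sub_nhds_zero_iff]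
  apply squeeze_zero_norm' (a := fun K => ((c q)⁻¹ * (1-r)⁻¹) * r ^ K)
  · filter_upwards [eventually_ge_atTop 1] with K hK
    have hEsum := summable_E hq (q := q) hK
    have hEe : Ee q K - 1 = ∑' n : ℕ, q^(K*(n+1)) / P q (n+1) := by
      rw [Ee, Summable.tsum_eq_zero_add hEsum]
      simp [P]
    rw [hEe]
    have hK1 : ∀ n : ℕ, ‖q ^ (K*(n+1)) / P q (n+1)‖ ≤ ((c q)⁻¹ * r^K) * r^n := by
      intro n
      rw [norm_div, norm_pow, ← hr]
      have hP := norm_P_ge hq (n+1)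
      have hle : K + n ≤ K*(n+1) := by
        have : n ≤ K*n := Nat.le_mul_of_pos_left n hK
        rw [Nat.mul_succ]
        omega
      have h1 : r ^ (K*(n+1)) ≤ r^(K+n) := pow_le_pow_of_le_one h0 hq.le hle
      calc r^(K*(n+1)) / ‖P q (n+1)‖ ≤ r^(K+n) / c q :=
            div_le_div₀ (pow_nonneg h0 _) h1 (c_pos q) hP
        _ = ((c q)⁻¹ * r^K) * r^n := by rw [pow_add, div_eq_inv_mul]; ring
    have := tsum_of_norm_bounded ((hasSum_geometric_of_lt_one h0 hq).mul_left ((c q)⁻¹ * r^K)) hK1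
    exact this.trans (le_of_eq (by ring))
  · have : Tendsto (fun K : ℕ => r ^ K) atTop (𝓝 0) :=
      tendsto_pow_atTop_nhds_zero_of_lt_one h0 hq
    simpa using this.const_mul ((c q)⁻¹ * (1-r)⁻¹)

end Stmt9
namespace Stmt9
open Finset Filter Topology
variable {q : ℂ}

lemma summable_log (hq : ‖q‖ < 1) :
    Summable fun j : ℕ => Complex.log (1 - q ^ (j+1)) := by
  set r := ‖q‖ with hr
  have h0 : (0:ℝ) ≤ r := norm_nonneg q
  apply Summable.of_norm_bounded (g := fun j => (r * (1-r)⁻¹ / 2 + 1) * r ^ (j+1))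
  · apply Summable.mul_left
    exact (summable_geometric_of_lt_one h0 hq).comp_injective (add_left_injective 1)
  · intro j
    have hz : ‖-q ^ (j+1)‖ < 1 := by
      rw [norm_neg, norm_pow]
      exact lt_of_le_of_lt (by simpa [norm_pow] using hpow hq j) hq
    have hb := Complex.norm_log_one_add_le hz
    rw [show (1 : ℂ) + -q^(j+1) = 1 - q^(j+1) by ring] at hb
    have hzr : ‖-q^(j+1)‖ = r^(j+1) := by rw [norm_neg, norm_pow]
    rw [hzr] at hb
    have hrj : r^(j+1) ≤ r := by simpa [norm_pow] using hpow hq j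
    have h2 : (r^(j+1))^2 * (1 - r^(j+1))⁻¹ / 2 ≤ r^(j+1) * (r * (1-r)⁻¹) / 2 := by
      have hr1 : (0:ℝ) < 1 - r := by linarith
      have hr2 : (0:ℝ) < 1 - r^(j+1) := by linarith [pow_nonneg h0 (j+1)]
      have e1 : (1 - r^(j+1))⁻¹ ≤ (1-r)⁻¹ := inv_anti₀ hr1 (by linarith)
      have e2 : (r^(j+1))^2 ≤ r^(j+1) * r := by nlinarith [pow_nonneg h0 (j+1)]
      have := mul_le_mul e2 e1 (inv_nonneg.2 hr2.le) (by positivity)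
      linarith
    have expand : (r * (1-r)⁻¹ / 2 + 1) * r ^ (j+1)
        = r^(j+1) * (r * (1-r)⁻¹) / 2 + r^(j+1) := by ring
    rw [expand]
    linarith

end Stmt9
namespace Stmt9
open Finset Filter Topology
variable {q : ℂ}

lemma multipliable_fac (hq : ‖q‖ < 1) : Multipliable fun j : ℕ => 1 - q ^ (j+1) := by
  exact Complex.multipliable_of_summable_log (summable_log hq)

lemma tendsto_P (hq : ‖q‖ < 1) :
    Tendsto (fun K => P q K) atTop (𝓝 (∏' j : ℕ, (1 - q ^ (j+1)))) :=
  (multipliable_fac hq).hasProd.tendsto_prod_nat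

lemma E1_mul_Pinf (hq : ‖q‖ < 1) : Ee q 1 * (∏' j : ℕ, (1 - q ^ (j+1))) = 1 := by
  have h1 : Tendsto (fun K => Ee q 1 * P q K) atTop (𝓝 (Ee q 1 * ∏' j : ℕ, (1 - q ^ (j+1)))) :=
    (tendsto_P hq).const_mul _
  have h2 : Tendsto (fun K => Ee q 1 * P q K) atTop (𝓝 1) := by
    have : (fun K => Ee q 1 * P q K) = fun K => Ee q (K+1) := by
      funext K
      rw [E_closed hq K]
    rw [this]
    exact (E_tendsto_one hq).comp (tendsto_add_atTop_nat 1)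
  exact tendsto_nhds_unique h1 h2

lemma E1_eq (hq : ‖q‖ < 1) : Ee q 1 = (∏' j : ℕ, (1 - q ^ (j+1)))⁻¹ :=
  eq_inv_of_mul_eq_one_left (E1_mul_Pinf hq)

end Stmt9
namespace Stmt9
open Finset Filter Topology
variable {q : ℂ}

lemma G_closed (hq : ‖q‖ < 1) (K : ℕ) :
    Gg q 1 = Ee q 1 * (∑ k ∈ range K, q^(k+1) / (1 - q^(k+1))) + Gg q (K+1) / P q K := by
  induction K with
  | zero => simp [P]
  | succ K ih =>
    have FEG := FE_G hq (k := K+1) (Nat.le_add_left 1 K)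
    have ECl := E_closed hq K
    have h1 : Gg q (K+1) * (1 - q^(K+1)) = q^(K+1) * Ee q 1 * P q K + Gg q (K+1+1) := by
      linear_combination FEG + q^(K+1) * ECl
    have hPK : P q K ≠ 0 := hPne hq K
    have hfK : (1:ℂ) - q^(K+1) ≠ 0 := hfac hq K
    rw [sum_range_succ, P_succ, ih]
    field_simp
    linear_combination h1
end Stmt9
namespace Stmt9
open Finset Filter Topology
variable {q : ℂ}

lemma tendsto_err (hq : ‖q‖ < 1) :
    Tendsto (fun K => Gg q (K+1) / P q K) atTop (𝓝 0) := by
  set r := ‖q‖ with hr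
  have h0 : (0:ℝ) ≤ r := norm_nonneg q
  have hT : Summable (fun n : ℕ => (n:ℝ) * r ^ n) := by
    simpa using summable_pow_mul_geometric_of_norm_lt_one 1
      (by rw [Real.norm_of_nonneg h0]; exact hq)
  set T : ℝ := ∑' n : ℕ, (n:ℝ) * r ^ n with hT'
  apply squeeze_zero_norm (a := fun K => ((c q)⁻¹ * ((c q)⁻¹ * T)) * r ^ K)
  · intro K
    have hGb : ‖Gg q (K+1)‖ ≤ ((c q)⁻¹ * r^K) * T := by
      rw [Gg]
      apply tsum_of_norm_bounded (hT.hasSum.mul_left ((c q)⁻¹ * r^K))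
      intro n
      have := norm_div_P_le hq (fun n : ℕ => (n:ℂ) * q ^ ((K+1)*n)) n
      refine this.trans ?_
      rw [norm_mul, Complex.norm_natCast, norm_pow, ← hr]
      rcases Nat.eq_zero_or_pos n with h | h
      · subst h; simp
      · have hle : K + n ≤ (K+1)*n := by
          have h2 : K ≤ K*n := Nat.le_mul_of_pos_right K h
          rw [add_mul, one_mul]
          omega
        have h1 : r ^ ((K+1)*n) ≤ r^(K+n) := pow_le_pow_of_le_one h0 hq.le hle
        calc (c q)⁻¹ * ((n:ℝ) * r ^ ((K+1)*n)) ≤ (c q)⁻¹ * ((n:ℝ) * r^(K+n)) := by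
              apply mul_le_mul_of_nonneg_left _ (inv_nonneg.2 (c_pos q).le)
              exact mul_le_mul_of_nonneg_left h1 (Nat.cast_nonneg n)
          _ = (c q)⁻¹ * r^K * ((n:ℝ) * r^n) := by rw [pow_add]; ring
    have hPb : ‖(P q K)⁻¹‖ ≤ (c q)⁻¹ := by
      rw [norm_inv]
      exact inv_anti₀ (c_pos q) (norm_P_ge hq K)
    rw [div_eq_mul_inv, norm_mul]
    calc ‖Gg q (K+1)‖ * ‖(P q K)⁻¹‖ ≤ (((c q)⁻¹ * r^K) * T) * (c q)⁻¹ := by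
          apply mul_le_mul hGb hPb (norm_nonneg _) ?_
          have hTnn : 0 ≤ T := tsum_nonneg (fun n => by positivity)
          have := c_pos q
          positivity
      _ = ((c q)⁻¹ * ((c q)⁻¹ * T)) * r ^ K := by ring
  · simpa using (tendsto_pow_atTop_nhds_zero_of_lt_one h0 hq).const_mul
      ((c q)⁻¹ * ((c q)⁻¹ * T))

lemma summable_B (hq : ‖q‖ < 1) : Summable fun n : ℕ => q^(n+1) / (1 - q^(n+1)) := by
  set r := ‖q‖ with hr
  have h0 : (0:ℝ) ≤ r := norm_nonneg q
  apply Summable.of_norm_bounded (g := fun n => (1-r)⁻¹ * r ^ (n+1))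
  · apply Summable.mul_left
    exact (summable_geometric_of_lt_one h0 hq).comp_injective (add_left_injective 1)
  · intro n
    rw [norm_div, norm_pow, ← hr]
    have hub : 1 - r ≤ ‖1 - q^(n+1)‖ := by
      calc 1 - r ≤ 1 - r^(n+1) := by
            have : r^(n+1) ≤ r := by simpa [norm_pow] using hpow hq n
            linarith
        _ = ‖(1:ℂ)‖ - ‖q^(n+1)‖ := by rw [norm_one, norm_pow]
        _ ≤ ‖1 - q^(n+1)‖ := norm_sub_norm_le _ _
    rw [div_eq_mul_inv, mul_comm]
    apply mul_le_mul_of_nonneg_right _ (pow_nonneg h0 _)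
    exact inv_anti₀ (by linarith) hub

lemma G1_eq (hq : ‖q‖ < 1) :
    Gg q 1 = Ee q 1 * ∑' n : ℕ, q^(n+1) / (1 - q^(n+1)) := by
  have h1 : Tendsto (fun K => Ee q 1 * (∑ k ∈ range K, q^(k+1) / (1 - q^(k+1)))
      + Gg q (K+1) / P q K) atTop
      (𝓝 (Ee q 1 * (∑' n : ℕ, q^(n+1) / (1 - q^(n+1))) + 0)) :=
    (((summable_B hq).hasSum.tendsto_sum_nat).const_mul _).add (tendsto_err hq)
  have h2 : (fun K => Ee q 1 * (∑ k ∈ range K, q^(k+1) / (1 - q^(k+1)))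
      + Gg q (K+1) / P q K) = fun _ => Gg q 1 := by
    funext K
    exact (G_closed hq K).symm
  rw [h2] at h1
  have := tendsto_nhds_unique h1 tendsto_const_nhds
  rw [add_zero] at this
  exact this.symm

end Stmt9

theorem statement9 (q : ℂ) (hq : ‖q‖ < 1) :
    ∑' n : ℕ, ((n : ℂ) + 1) * q ^ (n + 1) / ∏ j ∈ Finset.range (n + 1), (1 - q ^ (j + 1)) =
      (∏' j : ℕ, (1 - q ^ (j + 1)))⁻¹ * ∑' n : ℕ, q ^ (n + 1) / (1 - q ^ (n + 1)) := by
  have h1 : Stmt9.Gg q 1 = ∑' n : ℕ, ((n : ℂ) + 1) * q ^ (n + 1) /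
      ∏ j ∈ Finset.range (n + 1), (1 - q ^ (j + 1)) := by
    rw [Stmt9.Gg, Summable.tsum_eq_zero_add (Stmt9.summable_G hq le_rfl)]
    simp only [Nat.cast_zero, zero_mul, zero_div, zero_add, Stmt9.P]
    congr 1
    funext n
    push_cast
    rw [one_mul]
  rw [← h1, Stmt9.G1_eq hq, Stmt9.E1_eq hq]
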